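/- arXiv:2110.15693 — 3 statements merged into one kernel-verified Lean document; each statement's English description precedes it below -/
import Mathlib

section
/- Let G be a beer graph with beer-store set B, let u, v be vertices and let S be a set of vertices such that every walk in G from u to v visits at least one vertex of S. Then dist_B(u,v) = ⨅_{w ∈ S} min( dist_B(u,w) + dist(w,v) , dist(u,w) + dist_B(w,v) ), the infimum taken in ℝ≥0∞. -/
open scoped ENNReal

/-- The weight of a walk: the sum, with multiplicity, of the weights of its edges. -/
noncomputable def walkWeight {V : Type*} (ω : V → V → ℝ≥0∞) {G : SimpleGraph V}
    {u v : V} (p : G.Walk u v) : ℝ≥0∞ :=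
  (p.darts.map fun d => ω d.toProd.1 d.toProd.2).sum

/-- The (weighted) distance: the infimum in ℝ≥0∞ of the weights of all walks. -/
noncomputable def gDist {V : Type*} (G : SimpleGraph V) (ω : V → V → ℝ≥0∞) (u v : V) : ℝ≥0∞ :=
  ⨅ p : G.Walk u v, walkWeight ω p

/-- The beer distance: the infimum in ℝ≥0∞ of the weights of all walks visiting
a vertex of `B`. -/
noncomputable def beerDist {V : Type*} (G : SimpleGraph V) (ω : V → V → ℝ≥0∞)
    (B : Set V) (u v : V) : ℝ≥0∞ :=
  ⨅ (p : G.Walk u v) (_ : ∃ b ∈ B, b ∈ p.support), walkWeight ω p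

lemma walkWeight_append {V : Type*} (ω : V → V → ℝ≥0∞) {G : SimpleGraph V} {u v w : V}
    (p : G.Walk u v) (q : G.Walk v w) :
    walkWeight ω (p.append q) = walkWeight ω p + walkWeight ω q := by
  simp [walkWeight, SimpleGraph.Walk.darts_append]

/-- If every walk from u to v visits a vertex of S, then
dist_B(u,v) = ⨅_{w ∈ S} min( dist_B(u,w) + dist(w,v), dist(u,w) + dist_B(w,v) ). -/
theorem beerDist_eq_iInf_through_separator {V : Type*} [Fintype V] [DecidableEq V]
    (G : SimpleGraph V) (ω : V → V → ℝ≥0∞) (B : Set V)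
    (hsymm : ∀ a b, ω a b = ω b a)
    (hpos : ∀ a b, G.Adj a b → 0 < ω a b ∧ ω a b < ⊤)
    (u v : V) (S : Set V)
    (hS : ∀ p : G.Walk u v, ∃ s ∈ S, s ∈ p.support) :
    beerDist G ω B u v =
      ⨅ w ∈ S, min (beerDist G ω B u w + gDist G ω w v)
                   (gDist G ω u w + beerDist G ω B w v) := by
  classical
  apply le_antisymm
  · refine le_iInf₂ fun w hw => le_min ?_ ?_
    · have key : ∀ (q : G.Walk u w), (∃ b ∈ B, b ∈ q.support) → ∀ r : G.Walk w v,
          beerDist G ω B u v ≤ walkWeight ω q + walkWeight ω r := by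
        intro q hq r
        obtain ⟨b, hb, hbq⟩ := hq
        calc beerDist G ω B u v ≤ walkWeight ω (q.append r) := by
              refine iInf₂_le (q.append r) ⟨b, hb, ?_⟩
              rw [SimpleGraph.Walk.mem_support_append_iff]; exact Or.inl hbq
          _ = _ := walkWeight_append ω q r
      conv_rhs => rw [beerDist, gDist]
      rw [ENNReal.iInf_add]
      refine le_iInf fun q => ?_
      rw [ENNReal.iInf_add]
      refine le_iInf fun hq => ?_
      rw [ENNReal.add_iInf]
      exact le_iInf fun r => key q hq r
    · have key : ∀ (q : G.Walk u w), ∀ r : G.Walk w v, (∃ b ∈ B, b ∈ r.support) →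
          beerDist G ω B u v ≤ walkWeight ω q + walkWeight ω r := by
        intro q r hr
        obtain ⟨b, hb, hbr⟩ := hr
        calc beerDist G ω B u v ≤ walkWeight ω (q.append r) := by
              refine iInf₂_le (q.append r) ⟨b, hb, ?_⟩
              rw [SimpleGraph.Walk.mem_support_append_iff]; exact Or.inr hbr
          _ = _ := walkWeight_append ω q r
      conv_rhs => rw [gDist, beerDist]
      rw [ENNReal.iInf_add]
      refine le_iInf fun q => ?_
      rw [ENNReal.add_iInf]
      refine le_iInf fun r => ?_
      rw [ENNReal.add_iInf]
      exact le_iInf fun hr => key q r hr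
  · refine le_iInf fun p => le_iInf fun hp => ?_
    obtain ⟨s, hsS, hsp⟩ := hS p
    obtain ⟨b, hb, hbp⟩ := hp
    set q := p.takeUntil s hsp with hq
    set r := p.dropUntil s hsp with hr
    have hsplit : q.append r = p := (p.take_spec hsp)
    have hwt : walkWeight ω p = walkWeight ω q + walkWeight ω r := by
      rw [← hsplit, walkWeight_append]
    have hb' : b ∈ q.support ∨ b ∈ r.support := by
      rw [← SimpleGraph.Walk.mem_support_append_iff, hsplit]; exact hbp
    refine le_trans (iInf₂_le s hsS) ?_
    rcases hb' with h | h
    · refine le_trans (min_le_left _ _) ?_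
      rw [hwt]
      exact add_le_add (iInf₂_le q ⟨b, hb, h⟩) (iInf_le _ r)
    · refine le_trans (min_le_right _ _) ?_
      rw [hwt]
      exact add_le_add (iInf_le _ q) (iInf₂_le r ⟨b, hb, h⟩)
end

section
/- Let G be a beer graph with beer-store set B and let s be a vertex. (i) For every vertex v ∈ B, dist_B(s,v) = dist(s,v). (ii) For every vertex v ∉ B, dist_B(s,v) = ⨅ over all vertices u adjacent to v of ( dist_B(s,u) + ω(u,v) ), the infimum taken in ℝ≥0∞. -/
open scoped ENNReal

lemma walkWeight_concat {V : Type*} (ω : V → V → ℝ≥0∞) {G : SimpleGraph V}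
    {u v w : V} (p : G.Walk u v) (h : G.Adj v w) :
    walkWeight ω (p.concat h) = walkWeight ω p + ω v w := by
  rw [SimpleGraph.Walk.concat_eq_append, walkWeight_append]
  simp [walkWeight]

/-- (i) For v ∈ B, the beer distance from s to v equals the distance.
(ii) For v ∉ B, the beer distance from s to v is the infimum over neighbours u of v
of dist_B(s,u) + ω(u,v). -/
theorem beerDist_dijkstra_recurrence {V : Type*} [Fintype V] [DecidableEq V]
    (G : SimpleGraph V) (ω : V → V → ℝ≥0∞) (B : Set V)
    (hsymm : ∀ a b, ω a b = ω b a)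
    (hpos : ∀ a b, G.Adj a b → 0 < ω a b ∧ ω a b < ⊤)
    (s v : V) :
    (v ∈ B → beerDist G ω B s v = gDist G ω s v) ∧
    (v ∉ B → beerDist G ω B s v =
      ⨅ (u : V) (_ : G.Adj u v), beerDist G ω B s u + ω u v) := by
  constructor
  · intro hv
    refine le_antisymm (le_iInf fun p => iInf₂_le p ⟨v, hv, p.end_mem_support⟩)
      (le_iInf fun p => le_iInf fun _ => iInf_le _ p)
  · intro hv
    apply le_antisymm
    · refine le_iInf₂ fun u hadj => ?_
      simp only [beerDist]
      rw [ENNReal.iInf_add]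
      refine le_iInf fun q => ?_
      rw [ENNReal.iInf_add]
      refine le_iInf fun hq => ?_
      obtain ⟨b, hb, hbq⟩ := hq
      refine iInf₂_le_of_le (q.concat hadj) ⟨b, hb, ?_⟩ ?_
      · simp [SimpleGraph.Walk.support_concat, hbq]
      · rw [walkWeight_concat]
    · refine le_iInf₂ fun p hp => ?_
      obtain ⟨b, hb, hbp⟩ := hp
      have hnil : ¬ p.Nil := by
        intro h
        rw [SimpleGraph.Walk.nil_iff_support_eq] at h
        rw [h] at hbp
        have hvsupp := p.end_mem_support
        rw [h] at hvsupp
        simp at hbp hvsupp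
        subst hvsupp
        exact hv (hbp ▸ hb)
      have hnil' : ¬ p.reverse.Nil := by
        rw [SimpleGraph.Walk.nil_iff_length_eq, SimpleGraph.Walk.length_reverse,
          ← SimpleGraph.Walk.nil_iff_length_eq]
        exact hnil
      obtain ⟨u, h, q, hq⟩ := SimpleGraph.Walk.not_nil_iff.mp hnil'
      have hpq : p = q.reverse.concat h.symm := by
        have := congrArg SimpleGraph.Walk.reverse hq
        rwa [SimpleGraph.Walk.reverse_reverse, SimpleGraph.Walk.reverse_cons,
          ← SimpleGraph.Walk.concat_eq_append] at this
      have hbu : b ∈ q.reverse.support := by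
        rw [hpq, SimpleGraph.Walk.support_concat] at hbp
        rw [List.mem_append, List.mem_singleton] at hbp
        rcases hbp with h1 | h1
        · exact h1
        · exact absurd (h1 ▸ hb) hv
      refine le_trans (le_trans (iInf_le _ u) (iInf_le _ h.symm)) ?_
      rw [hpq, walkWeight_concat]
      exact add_le_add (iInf₂_le (f := fun (p : G.Walk s u) (_ : ∃ b ∈ B, b ∈ p.support) => walkWeight ω p) q.reverse ⟨b, hb, hbu⟩) le_rfl
end

section
/- Let T be a beer graph whose underlying graph is a tree (finite, connected and acyclic), with nonempty beer-store set B. For all vertices u and v, letting P denote the set of vertices on the unique simple path in T from u to v, dist_B(u,v) = dist(u,v) + 2 · min_{b ∈ B} min_{x ∈ P} dist(b,x). That is, in a beer tree the shortest beer walk follows the u–v path and makes one detour, traversed twice, to the beer store closest to that path. -/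
open scoped ENNReal

namespace BeerAux

open SimpleGraph Walk

variable {V : Type*} [DecidableEq V] {G : SimpleGraph V} {ω : V → V → ℝ≥0∞}

lemma wW_nil {u : V} : walkWeight ω (Walk.nil : G.Walk u u) = 0 := by
  simp [walkWeight]

lemma wW_cons {u v w : V} (h : G.Adj u v) (p : G.Walk v w) :
    walkWeight ω (Walk.cons h p) = ω u v + walkWeight ω p := by
  simp [walkWeight]

lemma wW_append {u v w : V} (p : G.Walk u v) (q : G.Walk v w) :
    walkWeight ω (p.append q) = walkWeight ω p + walkWeight ω q := by
  simp [walkWeight, Walk.darts_append]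

lemma wW_concat {u v w : V} (p : G.Walk u v) (h : G.Adj v w) :
    walkWeight ω (p.concat h) = walkWeight ω p + ω v w := by
  simp [Walk.concat_eq_append, wW_append, wW_cons, wW_nil]

lemma wW_reverse (hsymm : ∀ a b, ω a b = ω b a) {u v : V} (p : G.Walk u v) :
    walkWeight ω p.reverse = walkWeight ω p := by
  unfold walkWeight
  rw [Walk.darts_reverse, List.map_reverse, List.sum_reverse, List.map_map]
  have hfun : ((fun d => ω d.toProd.1 d.toProd.2) ∘ Dart.symm)
      = fun d : G.Dart => ω d.toProd.1 d.toProd.2 := by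
    funext d
    simp only [Function.comp_apply, SimpleGraph.Dart.symm_toProd, Prod.fst_swap, Prod.snd_swap]
    exact hsymm _ _
  rw [hfun]

lemma wW_bypass_le {u v : V} (q : G.Walk u v) :
    walkWeight ω q.bypass ≤ walkWeight ω q := by
  induction q with
  | nil => simp [Walk.bypass]
  | cons h q ih =>
    rw [Walk.bypass]
    split_ifs with hs
    · refine le_trans ?_ (le_trans ih ?_)
      · conv_rhs => rw [← Walk.take_spec q.bypass hs]
        rw [wW_append]
        exact le_add_self
      · rw [wW_cons]
        exact le_add_self
    · rw [wW_cons, wW_cons]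
      exact add_le_add_right ih _

lemma walk_unique (ht : G.IsAcyclic) {a c : V} (r s : G.Walk a c)
    (hr : r.IsPath) (hs : s.IsPath) : r = s := by
  have := (SimpleGraph.isAcyclic_iff_path_unique.mp ht) ⟨r, hr⟩ ⟨s, hs⟩
  exact congrArg Subtype.val this

lemma gDist_le {a c : V} (q : G.Walk a c) : gDist G ω a c ≤ walkWeight ω q :=
  iInf_le _ q

lemma gDist_eq_path (ht : G.IsAcyclic) {a c : V} (r : G.Walk a c) (hr : r.IsPath) :
    gDist G ω a c = walkWeight ω r := by
  refine le_antisymm (gDist_le r) (le_iInf fun q => ?_)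
  have h2 : q.bypass = r := walk_unique ht _ _ q.bypass_isPath hr
  calc walkWeight ω r = walkWeight ω q.bypass := by rw [h2]
    _ ≤ walkWeight ω q := wW_bypass_le q

lemma gDist_symm (hsymm : ∀ a b, ω a b = ω b a) (a c : V) :
    gDist G ω a c = gDist G ω c a := by
  have key : ∀ a c : V, gDist G ω c a ≤ gDist G ω a c := fun a c =>
    le_iInf fun q => (gDist_le q.reverse).trans_eq (wW_reverse hsymm q)
  exact le_antisymm (key c a) (key a c)

lemma isPath_concat {a c d : V} {r : G.Walk a c} (hr : r.IsPath) (h : G.Adj c d)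
    (hd : d ∉ r.support) : (r.concat h).IsPath := by
  rw [← isPath_reverse_iff, reverse_concat]
  exact (hr.reverse).cons (by simpa [support_reverse] using hd)

lemma lemF (ht : G.IsAcyclic) {w v : V} (s : G.Walk w v) :
    s.IsPath → ∀ {u b : V} (h : G.Adj u w), u ∉ s.support →
      ∀ (r : G.Walk b u), r.IsPath → w ∉ r.support →
      gDist G ω b v = gDist G ω b u + ω u w + walkWeight ω s := by
  induction s with
  | nil =>
    intro _ u b h _ r hr hrw
    have hcp : (r.concat h).IsPath := isPath_concat hr h hrw
    rw [gDist_eq_path ht _ hcp, wW_concat, gDist_eq_path ht r hr, wW_nil, add_zero]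
  | @cons w w₂ v h₂ s' ih =>
    intro hs u b h hu r hr hrw
    obtain ⟨hs', hws'⟩ := (cons_isPath_iff _ _).mp hs
    have huw2 : u ≠ w₂ := by
      rintro rfl
      exact hu (by simp [s'.start_mem_support])
    have hw2r : w₂ ∉ r.support := by
      intro hmem
      have hdp : ((r.dropUntil w₂ hmem).concat h).IsPath :=
        isPath_concat (hr.dropUntil hmem) h
          (fun hw => hrw (support_dropUntil_subset _ _ hw))
      have hep : (Walk.cons h₂.symm Walk.nil : G.Walk w₂ w).IsPath := by simp [h₂.ne']
      have heq := walk_unique ht _ _ hdp hep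
      have humem : u ∈ ((r.dropUntil w₂ hmem).concat h).support := by
        rw [support_concat]
        exact List.mem_append.2 (Or.inl ((r.dropUntil w₂ hmem).end_mem_support))
      rw [heq] at humem
      simp only [support_cons, support_nil, List.mem_cons, List.mem_singleton,
        List.not_mem_nil, or_false] at humem
      rcases humem with h1 | h1
      · exact huw2 h1
      · exact (G.ne_of_adj h) h1
    have hrcp : (r.concat h).IsPath := isPath_concat hr h hrw
    have hw2rc : w₂ ∉ (r.concat h).support := by
      rw [support_concat]
      simp only [List.mem_append, List.mem_singleton, not_or]
      exact ⟨hw2r, h₂.ne'⟩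
    have key := ih hs' h₂ hws' (r.concat h) hrcp hw2rc
    have hbw : gDist G ω b w = gDist G ω b u + ω u w := by
      rw [gDist_eq_path ht _ hrcp, wW_concat, gDist_eq_path ht r hr]
    rw [key, hbw, wW_cons]
    ring

lemma lemC (ht : G.IsAcyclic) (hconn : G.Preconnected) (hsymm : ∀ a b, ω a b = ω b a)
    {u v : V} (p : G.Walk u v) :
    p.IsPath → ∀ b : V,
      ∃ x ∈ p.support, walkWeight ω p + 2 * gDist G ω b x ≤ gDist G ω u b + gDist G ω b v := by
  induction p with
  | nil =>
    intro _ b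
    refine ⟨_, Walk.start_mem_support Walk.nil, ?_⟩
    rw [wW_nil, zero_add, two_mul, gDist_symm hsymm _ b]
  | @cons u w v h p' ih =>
    intro hp b
    obtain ⟨hp', hup'⟩ := (cons_isPath_iff _ _).mp hp
    obtain ⟨r, hr⟩ : ∃ r : G.Walk b u, r.IsPath := ⟨(hconn b u).some.bypass, bypass_isPath _⟩
    by_cases hwr : w ∈ r.support
    · have hdrop : r.dropUntil w hwr = Walk.cons h.symm Walk.nil :=
        walk_unique ht _ _ (hr.dropUntil hwr) (by simp [h.ne'])
      have hbu : gDist G ω b u = gDist G ω b w + ω w u := by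
        rw [gDist_eq_path ht r hr]
        conv_lhs => rw [← take_spec r hwr]
        rw [wW_append, hdrop, wW_cons, wW_nil, add_zero,
          gDist_eq_path ht _ (hr.takeUntil hwr)]
      obtain ⟨x, hx, hineq⟩ := ih hp' b
      refine ⟨x, by simp [hx], ?_⟩
      rw [wW_cons]
      calc ω u w + walkWeight ω p' + 2 * gDist G ω b x
          ≤ ω u w + (gDist G ω w b + gDist G ω b v) := by
            rw [add_assoc]; exact add_le_add_right hineq _
        _ = gDist G ω u b + gDist G ω b v := by
            rw [gDist_symm hsymm u b, hbu, gDist_symm hsymm w b, hsymm w u]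
            ring
    · have hF := lemF (ω := ω) ht p' hp' h hup' r hr hwr
      refine ⟨u, by simp, ?_⟩
      rw [wW_cons, hF, gDist_symm hsymm u b]
      exact le_of_eq (by ring)

lemma exists_mem_iInf {α : Type*} {s : Set α} (hs : s.Finite) (hne : s.Nonempty)
    (f : α → ℝ≥0∞) : ∃ a ∈ s, (⨅ b ∈ s, f b) = f a := by
  have h1 : sInf (f '' s) ∈ f '' s := (hne.image f).csInf_mem (hs.image f)
  obtain ⟨a, ha, hfa⟩ := h1
  exact ⟨a, ha, by rw [← sInf_image, hfa]⟩

end BeerAux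

open BeerAux SimpleGraph Walk in
/-- In a beer tree with a nonempty set of beer stores, the beer distance
between u and v equals dist(u,v) plus twice the smallest distance from a beer store to a
vertex on the unique simple path from u to v. -/
theorem beerDist_in_tree {V : Type*} [Fintype V] [DecidableEq V]
    (G : SimpleGraph V) (ω : V → V → ℝ≥0∞) (B : Set V)
    (hsymm : ∀ a b, ω a b = ω b a)
    (hpos : ∀ a b, G.Adj a b → 0 < ω a b ∧ ω a b < ⊤)
    (htree : G.IsTree) (hB : B.Nonempty)
    (u v : V) (p : G.Walk u v) (hp : p.IsPath) :
    beerDist G ω B u v =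
      gDist G ω u v + 2 * ⨅ b ∈ B, ⨅ x ∈ p.support, gDist G ω b x := by
  classical
  have ht : G.IsAcyclic := htree.2
  have hconn : G.Preconnected := htree.1.preconnected
  apply le_antisymm
  · -- upper bound
    obtain ⟨b₀, hb₀, hfb⟩ :
        ∃ b₀ ∈ B, (⨅ b ∈ B, ⨅ x ∈ p.support, gDist G ω b x)
          = ⨅ x ∈ p.support, gDist G ω b₀ x :=
      exists_mem_iInf (Set.toFinite B) hB _
    obtain ⟨x₀, hx₀, hgx⟩ :
        ∃ x₀ ∈ {x | x ∈ p.support}, (⨅ x ∈ {x | x ∈ p.support}, gDist G ω b₀ x)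
          = gDist G ω b₀ x₀ :=
      exists_mem_iInf (p.support.finite_toSet) ⟨u, p.start_mem_support⟩ _
    have hx₀' : x₀ ∈ p.support := hx₀
    obtain ⟨t0⟩ := hconn x₀ b₀
    have ht_path : t0.bypass.IsPath := bypass_isPath _
    set t := t0.bypass with htdef
    have hwt : walkWeight ω t = gDist G ω x₀ b₀ := (gDist_eq_path ht t ht_path).symm
    set q := (p.takeUntil x₀ hx₀').append (t.append (t.reverse.append (p.dropUntil x₀ hx₀')))
      with hqdef
    have hbq : ∃ b ∈ B, b ∈ q.support := by
      refine ⟨b₀, hb₀, ?_⟩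
      rw [hqdef]
      simp only [mem_support_append_iff]
      exact Or.inr (Or.inl t.end_mem_support)
    have hle : beerDist G ω B u v ≤ walkWeight ω q := iInf₂_le q hbq
    refine hle.trans (le_of_eq ?_)
    have hsplit : walkWeight ω (p.takeUntil x₀ hx₀') + walkWeight ω (p.dropUntil x₀ hx₀')
        = walkWeight ω p := by rw [← wW_append, take_spec]
    have hmm : (⨅ b ∈ B, ⨅ x ∈ p.support, gDist G ω b x) = gDist G ω x₀ b₀ := by
      rw [hfb]
      rw [show (⨅ x ∈ p.support, gDist G ω b₀ x) = gDist G ω b₀ x₀ from hgx]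
      exact gDist_symm hsymm b₀ x₀
    rw [hqdef, wW_append, wW_append, wW_append, wW_reverse hsymm, hwt, hmm,
      gDist_eq_path ht p hp, ← hsplit]
    ring
  · -- lower bound
    show _ ≤ beerDist G ω B u v
    unfold beerDist
    refine le_iInf fun q => le_iInf fun hq => ?_
    obtain ⟨b, hbB, hbq⟩ := hq
    have hsplit : walkWeight ω q
        = walkWeight ω (q.takeUntil b hbq) + walkWeight ω (q.dropUntil b hbq) := by
      rw [← wW_append, take_spec]
    obtain ⟨x, hx, hC⟩ := lemC ht hconn hsymm p hp b
    have hmle : (⨅ b ∈ B, ⨅ x ∈ p.support, gDist G ω b x) ≤ gDist G ω b x :=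
      le_trans (iInf₂_le b hbB) (iInf₂_le x hx)
    calc gDist G ω u v + 2 * ⨅ b ∈ B, ⨅ x ∈ p.support, gDist G ω b x
        ≤ walkWeight ω p + 2 * gDist G ω b x := by
          rw [gDist_eq_path ht p hp]
          exact add_le_add_right (mul_le_mul_right hmle 2) _
      _ ≤ gDist G ω u b + gDist G ω b v := hC
      _ ≤ walkWeight ω (q.takeUntil b hbq) + walkWeight ω (q.dropUntil b hbq) :=
          add_le_add (gDist_le _) (gDist_le _)
      _ = walkWeight ω q := hsplit.symm
end
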